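/- For any q with q ≠ 1, q ≠ −1 and any positive integer n, ∑_{k=1}^{n} q^{2n−2k} (1−q^k)^2 (1−q^{2k}) / ((1−q)^2 (1−q^2)) equals the square of the Gaussian binomial coefficient [n+1 choose 2]_q (Warnaar's q-analogue of the sum of cubes). -/
import Mathlib

lemma warnaar_aux (q : ℝ) : ∀ n : ℕ, 1 ≤ n →
    ∑ k ∈ Finset.Icc 1 n,
        q ^ (2 * n - 2 * k) * (1 - q ^ k) ^ 2 * (1 - q ^ (2 * k)) * (1 - q ^ 2)
      = ((1 - q ^ (n + 1)) * (1 - q ^ n)) ^ 2 := by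
  intro n hn
  induction n with
  | zero => omega
  | succ m ih =>
    rcases Nat.eq_zero_or_pos m with hm | hm
    · subst hm
      simp
      ring
    · rw [Finset.sum_Icc_succ_top (by omega : 1 ≤ m + 1)]
      have hsum : ∑ k ∈ Finset.Icc 1 m,
          q ^ (2 * (m + 1) - 2 * k) * (1 - q ^ k) ^ 2 * (1 - q ^ (2 * k)) * (1 - q ^ 2)
          = q ^ 2 * ∑ k ∈ Finset.Icc 1 m,
          q ^ (2 * m - 2 * k) * (1 - q ^ k) ^ 2 * (1 - q ^ (2 * k)) * (1 - q ^ 2) := by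
        rw [Finset.mul_sum]
        apply Finset.sum_congr rfl
        intro k hk
        have hk' := Finset.mem_Icc.mp hk
        rw [show 2 * (m + 1) - 2 * k = 2 + (2 * m - 2 * k) by omega, pow_add]
        ring
      rw [hsum, ih hm, show 2 * (m + 1) - 2 * (m + 1) = 0 by omega]
      ring

theorem warnaar_q_sum_cubes (q : ℝ) (hq : q ≠ 1) (hq' : q ≠ -1) (n : ℕ) (hn : 0 < n) :
    ∑ k ∈ Finset.Icc 1 n,
        q ^ (2 * n - 2 * k) * (1 - q ^ k) ^ 2 * (1 - q ^ (2 * k)) /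
          ((1 - q) ^ 2 * (1 - q ^ 2)) =
      ((1 - q ^ (n + 1)) * (1 - q ^ n) / ((1 - q) * (1 - q ^ 2))) ^ 2 := by
  have h1 : (1 - q) ≠ 0 := sub_ne_zero.mpr (fun h => hq h.symm)
  have h2 : (1 - q ^ 2) ≠ 0 := by
    intro h
    have : (1 - q) * (1 + q) = 0 := by ring_nf; nlinarith [sq_nonneg q]
    rcases mul_eq_zero.mp this with h' | h'
    · exact h1 h'
    · exact hq' (by linarith)
  have key := warnaar_aux q n hn
  rw [← Finset.sum_div]
  rw [← Finset.sum_mul] at key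
  rw [div_pow, div_eq_div_iff (mul_ne_zero (pow_ne_zero _ h1) h2)
    (pow_ne_zero _ (mul_ne_zero h1 h2))]
  linear_combination ((1 - q) ^ 2 * (1 - q ^ 2)) * key
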